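/- arXiv:1812.09816 — 3 statements merged into one kernel-verified Lean document; each statement's English description precedes it below -/
import Mathlib

section
/- Let P, Q : [0, η_B] → ℝ be continuous with P > 0 on [0, η_B], and suppose G : [0, η_B] → ℝ is a nonzero C² function satisfying (P·G')' + Q·G = −λ·G on [0, η_B] with G(0) = G(η_B) = 0, where λ ∈ ℝ. Then λ > min_{η ∈ [0, η_B]} (−Q(η)). -/
theorem sturm_liouville_eigenvalue_bound (ηB lam : ℝ) (hηB : 0 < ηB)
    (P Q G : ℝ → ℝ)
    (hPc : ContinuousOn P (Set.Icc 0 ηB)) (hQc : ContinuousOn Q (Set.Icc 0 ηB))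
    (hPpos : ∀ η ∈ Set.Icc 0 ηB, 0 < P η)
    (hG : ContDiff ℝ 2 G)
    (hGnz : ∃ η ∈ Set.Icc 0 ηB, G η ≠ 0)
    (hode : ∀ η ∈ Set.Icc 0 ηB,
      HasDerivAt (fun x => P x * deriv G x) (-lam * G η - Q η * G η) η)
    (hbc0 : G 0 = 0) (hbcB : G ηB = 0) :
    sInf ((fun η => -Q η) '' Set.Icc 0 ηB) < lam := by
  by_contra hcon
  push_neg at hcon
  -- lam ≤ -Q η for all η ∈ Icc
  have hQcomp : IsCompact ((fun η => -Q η) '' Set.Icc 0 ηB) :=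
    isCompact_Icc.image_of_continuousOn (hQc.neg)
  have hbdd : BddBelow ((fun η => -Q η) '' Set.Icc 0 ηB) := hQcomp.bddBelow
  have hlam : ∀ η ∈ Set.Icc 0 ηB, lam + Q η ≤ 0 := by
    intro η hη
    have : sInf ((fun η => -Q η) '' Set.Icc 0 ηB) ≤ -Q η :=
      csInf_le hbdd ⟨η, hη, rfl⟩
    linarith [hcon.trans this]
  have hGc : Continuous G := hG.continuous
  have hG'c : Continuous (deriv G) := (hG.iterate_deriv' 1 1).continuous
  have huIcc : Set.uIcc (0:ℝ) ηB = Set.Icc 0 ηB := Set.uIcc_of_le hηB.le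
  -- integration by parts
  have hv : ∀ x ∈ Set.uIcc (0:ℝ) ηB, HasDerivAt G (deriv G x) x := fun x _ =>
    (hG.differentiable (by norm_num)).differentiableAt.hasDerivAt
  have hu : ∀ x ∈ Set.uIcc (0:ℝ) ηB,
      HasDerivAt (fun x => P x * deriv G x) (-lam * G x - Q x * G x) x := by
    rw [huIcc]; exact hode
  have hu'int : IntervalIntegrable (fun x => -lam * G x - Q x * G x) MeasureTheory.volume 0 ηB := by
    apply ContinuousOn.intervalIntegrable
    rw [huIcc]
    exact (continuousOn_const.mul hGc.continuousOn).sub (hQc.mul hGc.continuousOn)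
  have hv'int : IntervalIntegrable (deriv G) MeasureTheory.volume 0 ηB :=
    hG'c.intervalIntegrable 0 ηB
  have parts := intervalIntegral.integral_mul_deriv_eq_deriv_mul hu hv hu'int hv'int
  rw [hbc0, hbcB, mul_zero, mul_zero, sub_zero, zero_sub] at parts
  -- LHS positive
  have hη0 : ∃ η0 ∈ Set.Ioo 0 ηB, G η0 ≠ 0 := by
    obtain ⟨η0, hη0, hne⟩ := hGnz
    refine ⟨η0, ⟨?_, ?_⟩, hne⟩
    · rcases lt_or_eq_of_le hη0.1 with h | h
      · exact h
      · exact absurd (h ▸ hbc0) hne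
    · rcases lt_or_eq_of_le hη0.2 with h | h
      · exact h
      · subst h; exact absurd hbcB hne
  obtain ⟨η0, hη0mem, hη0ne⟩ := hη0
  -- MVT: exists c in (0, η0) with deriv G c ≠ 0
  have hmvt : ∃ c ∈ Set.Ioo 0 η0, deriv G c = (G η0 - G 0) / (η0 - 0) := by
    apply exists_deriv_eq_slope G hη0mem.1 hGc.continuousOn
    exact (hG.differentiable (by norm_num)).differentiableOn
  obtain ⟨c, hc, hceq⟩ := hmvt
  have hc' : deriv G c ≠ 0 := by
    rw [hceq, hbc0, sub_zero, sub_zero]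
    exact div_ne_zero hη0ne (ne_of_gt hη0mem.1)
  have hcIcc : c ∈ Set.Icc 0 ηB := ⟨hc.1.le, hc.2.le.trans hη0mem.2.le⟩
  have hpos : 0 < ∫ x in (0:ℝ)..ηB, P x * deriv G x * deriv G x := by
    apply intervalIntegral.integral_pos hηB
    · exact (hPc.mul hG'c.continuousOn).mul hG'c.continuousOn
    · intro x hx
      have := hPpos x ⟨hx.1.le, hx.2⟩
      nlinarith [sq_nonneg (deriv G x)]
    · refine ⟨c, hcIcc, ?_⟩
      rw [mul_assoc]
      exact mul_pos (hPpos c hcIcc) (mul_self_pos.mpr hc')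
  -- RHS nonpositive
  have hneg : (∫ x in (0:ℝ)..ηB, (-lam * G x - Q x * G x) * G x) ≥ 0 := by
    apply intervalIntegral.integral_nonneg hηB.le
    intro x hx
    have := hlam x hx
    nlinarith [sq_nonneg (G x)]
  rw [parts] at hpos
  linarith
end

section
/- Let H : [Z₁,Z₂] × [0,∞) → ℝ and H_S : [Z₁,Z₂] → ℝ be strictly positive, with H(·,T) sufficiently smooth, satisfying ∂(H²)/∂T = ∂/∂Z(H² ∂H/∂Z), with H_S stationary (H_S² H_S' ≡ const), and suppose (H³ − H_S³)·∂(H³ − H_S³)/∂Z vanishes at Z₁ and Z₂ for all T. Then d/dT ∫_{Z₁}^{Z₂} [(2/5)H⁵ − H_S³H² + (3/5)H_S⁵] dZ = −(1/3)∫_{Z₁}^{Z₂} [∂(H³ − H_S³)/∂Z]² dZ ≤ 0. -/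
open MeasureTheory Set intervalIntegral Filter Metric

theorem lyapunov_energy_decay (Z₁ Z₂ : ℝ) (hZ : Z₁ < Z₂)
    (H : ℝ → ℝ → ℝ) (HS : ℝ → ℝ)
    (hHsmooth : ContDiff ℝ 2 (fun p : ℝ × ℝ => H p.1 p.2))
    (hHSsmooth : ContDiff ℝ 2 HS)
    (hHpos : ∀ Z ∈ Set.Icc Z₁ Z₂, ∀ T : ℝ, 0 ≤ T → 0 < H Z T)
    (hHSpos : ∀ Z ∈ Set.Icc Z₁ Z₂, 0 < HS Z)
    (hpde : ∀ Z ∈ Set.Icc Z₁ Z₂, ∀ T : ℝ, 0 ≤ T →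
      deriv (fun t => (H Z t) ^ 2) T =
        deriv (fun z => (H z T) ^ 2 * deriv (fun w => H w T) z) Z)
    (hstat : ∃ c : ℝ, ∀ Z ∈ Set.Icc Z₁ Z₂, (HS Z) ^ 2 * deriv HS Z = c)
    (hbc : ∀ T : ℝ, 0 ≤ T →
      ((H Z₁ T) ^ 3 - (HS Z₁) ^ 3) *
          deriv (fun z => (H z T) ^ 3 - (HS z) ^ 3) Z₁ = 0 ∧
        ((H Z₂ T) ^ 3 - (HS Z₂) ^ 3) *
          deriv (fun z => (H z T) ^ 3 - (HS z) ^ 3) Z₂ = 0) :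
    ∀ T : ℝ, 0 ≤ T →
      HasDerivAt
          (fun t => ∫ Z in Z₁..Z₂,
            2 / 5 * (H Z t) ^ 5 - (HS Z) ^ 3 * (H Z t) ^ 2 + 3 / 5 * (HS Z) ^ 5)
          (-(1 / 3) * ∫ Z in Z₁..Z₂,
            (deriv (fun z => (H z T) ^ 3 - (HS z) ^ 3) Z) ^ 2) T ∧
        -(1 / 3) * (∫ Z in Z₁..Z₂,
            (deriv (fun z => (H z T) ^ 3 - (HS z) ^ 3) Z) ^ 2) ≤ 0 := by
  have hHfd : Differentiable ℝ (fun p : ℝ × ℝ => H p.1 p.2) :=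
    hHsmooth.differentiable (by norm_num)
  have hHScont : Continuous HS := hHSsmooth.continuous
  have hHSdiff : Differentiable ℝ HS := hHSsmooth.differentiable (by norm_num)
  -- partial derivatives
  set Ht : ℝ → ℝ → ℝ := fun z t => fderiv ℝ (fun p : ℝ × ℝ => H p.1 p.2) (z, t) (0, 1) with hHtdef
  set Hz : ℝ → ℝ → ℝ := fun z t => fderiv ℝ (fun p : ℝ × ℝ => H p.1 p.2) (z, t) (1, 0) with hHzdef
  have hline_t : ∀ z t : ℝ, HasDerivAt (fun s => H z s) (Ht z t) t := by
    intro z t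
    have h1 : HasDerivAt (fun s : ℝ => ((z, s) : ℝ × ℝ)) (0, 1) t :=
      (hasDerivAt_const t z).prodMk (hasDerivAt_id t)
    exact (hHfd (z, t)).hasFDerivAt.comp_hasDerivAt t h1
  have hline_z : ∀ z t : ℝ, HasDerivAt (fun w => H w t) (Hz z t) z := by
    intro z t
    have h1 : HasDerivAt (fun w : ℝ => ((w, t) : ℝ × ℝ)) (1, 0) z :=
      (hasDerivAt_id z).prodMk (hasDerivAt_const z t)
    exact (hHfd (z, t)).hasFDerivAt.comp_hasDerivAt z h1
  have hHtcont : Continuous (fun p : ℝ × ℝ => Ht p.1 p.2) :=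
    (hHsmooth.continuous_fderiv (by norm_num)).clm_apply continuous_const
  have hHcont : Continuous (fun p : ℝ × ℝ => H p.1 p.2) := hHsmooth.continuous
  intro T hT
  obtain ⟨hb1, hb2⟩ := hbc T hT
  obtain ⟨c, hc⟩ := hstat
  -- slice smoothness in z
  have hslice : ∀ t : ℝ, ContDiff ℝ 2 (fun z => H z t) := fun t =>
    hHsmooth.comp (contDiff_id.prodMk contDiff_const)
  set R : ℝ → ℝ := fun z => H z T ^ 3 - HS z ^ 3 with hRdef
  have hH3 : ContDiff ℝ 2 (fun z => H z T ^ 3) := (hslice T).pow 3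
  have hHS3 : ContDiff ℝ 2 (fun z => HS z ^ 3) := hHSsmooth.pow 3
  have hR : ContDiff ℝ 2 R := hH3.sub hHS3
  have hRd1 : ContDiff ℝ 1 (deriv R) := by
    have h2 : ContDiff ℝ (1 + 1) R := by norm_num; exact hR
    exact (contDiff_succ_iff_deriv.mp h2).2.2
  have hRdiff : Differentiable ℝ R := hR.differentiable (by norm_num)
  have hRd_diff : Differentiable ℝ (deriv R) := hRd1.differentiable one_ne_zero
  have hRd_cont : Continuous (deriv R) := hRd1.continuous
  have hRdd_cont : Continuous (deriv (deriv R)) := hRd1.continuous_deriv le_rfl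
  -- second part of the conclusion
  have hInn : (0:ℝ) ≤ ∫ Z in Z₁..Z₂, (deriv R Z) ^ 2 :=
    intervalIntegral.integral_nonneg hZ.le (fun u _ => sq_nonneg _)
  refine ⟨?_, by nlinarith⟩

  -- pointwise z-derivative identities
  have hHzderiv : ∀ w, deriv (fun y => H y T) w = Hz w T := fun w => (hline_z w T).deriv
  have hPval : ∀ w, deriv (fun y => H y T ^ 3) w = 3 * H w T ^ 2 * Hz w T := by
    intro w
    rw [((hline_z w T).fun_pow 3).deriv]; norm_num
  have hQval : ∀ w, deriv (fun y => HS y ^ 3) w = 3 * HS w ^ 2 * deriv HS w := by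
    intro w
    rw [(((hHSdiff w).hasDerivAt).fun_pow 3).deriv]; norm_num
  have hPdiff : Differentiable ℝ (deriv (fun z => H z T ^ 3)) := by
    have h2 : ContDiff ℝ (1 + 1) (fun z => H z T ^ 3) := by norm_num; exact hH3
    exact ((contDiff_succ_iff_deriv.mp h2).2.2).differentiable one_ne_zero
  have hQdiff : Differentiable ℝ (deriv (fun z => HS z ^ 3)) := by
    have h2 : ContDiff ℝ (1 + 1) (fun z => HS z ^ 3) := by norm_num; exact hHS3
    exact ((contDiff_succ_iff_deriv.mp h2).2.2).differentiable one_ne_zero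
  have hRderiv : ∀ w, deriv R w
      = deriv (fun z => H z T ^ 3) w - deriv (fun z => HS z ^ 3) w := by
    intro w
    rw [hRdef]
    exact deriv_sub (hH3.differentiable (by norm_num) w) (hHS3.differentiable (by norm_num) w)
  have hRdfun : deriv R
      = fun w => deriv (fun z => H z T ^ 3) w - deriv (fun z => HS z ^ 3) w := funext hRderiv
  have hQderiv0 : ∀ z ∈ Set.Ioo Z₁ Z₂, deriv (deriv (fun z => HS z ^ 3)) z = 0 := by
    intro z hz
    have hev : deriv (fun z => HS z ^ 3) =ᶠ[nhds z] fun _ => 3 * c := by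
      filter_upwards [Icc_mem_nhds hz.1 hz.2] with w hw
      rw [hQval w, ← hc w hw]; ring
    rw [hev.deriv_eq]; exact deriv_const z _
  have hRdd : ∀ z ∈ Set.Ioo Z₁ Z₂,
      deriv (deriv R) z = deriv (deriv (fun z => H z T ^ 3)) z := by
    intro z hz
    rw [hRdfun, deriv_fun_sub (hPdiff z) (hQdiff z), hQderiv0 z hz, sub_zero]
  -- PDE at time T
  have hpde' : ∀ z ∈ Set.Icc Z₁ Z₂, (H z T ^ 3 - HS z ^ 3) * (2 * H z T * Ht z T)
      = R z * ((1 / 3) * deriv (deriv (fun y => H y T ^ 3)) z) := by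
    intro z hz
    have h1 : deriv (fun t => H z t ^ 2) T = 2 * H z T * Ht z T := by
      rw [((hline_t z T).fun_pow 2).deriv]; norm_num
    have h3 : (fun w => H w T ^ 2 * deriv (fun y => H y T) w)
        = fun w => (1 / 3) * deriv (fun y => H y T ^ 3) w := by
      funext w; rw [hHzderiv w, hPval w]; ring
    have h4 : deriv (fun t => H z t ^ 2) T = (1 / 3) * deriv (deriv (fun y => H y T ^ 3)) z := by
      rw [hpde z hz T hT, h3, deriv_const_mul _ (hPdiff z)]
    have h5 : (H z T ^ 3 - HS z ^ 3) * (2 * H z T * Ht z T)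
        = R z * (2 * H z T * Ht z T) := rfl
    rw [h5, ← h1, h4]
  -- rewrite the integrand a.e.
  have hcongr : (∫ z in Z₁..Z₂, (H z T ^ 3 - HS z ^ 3) * (2 * H z T * Ht z T))
      = ∫ z in Z₁..Z₂, (1 / 3) * (R z * deriv (deriv R) z) := by
    apply intervalIntegral.integral_congr_ae
    have hne : ∀ᵐ z : ℝ, z ≠ Z₂ := by
      have h0 : volume ({Z₂} : Set ℝ) = 0 := Real.volume_singleton
      filter_upwards [MeasureTheory.compl_mem_ae_iff.mpr h0] with z hz
      simpa using hz
    filter_upwards [hne] with z hzne hzmem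
    have hz' : z ∈ Set.Ioo Z₁ Z₂ := by
      rw [Set.uIoc_of_le hZ.le] at hzmem
      exact ⟨hzmem.1, lt_of_le_of_ne hzmem.2 hzne⟩
    rw [hpde' z (Set.Ioo_subset_Icc_self hz'), ← hRdd z hz']
    ring
  -- integration by parts
  have hibp : (∫ z in Z₁..Z₂, R z * deriv (deriv R) z)
      = R Z₂ * deriv R Z₂ - R Z₁ * deriv R Z₁ - ∫ z in Z₁..Z₂, deriv R z * deriv R z :=
    intervalIntegral.integral_mul_deriv_eq_deriv_mul
      (fun x _ => (hRdiff x).hasDerivAt) (fun x _ => (hRd_diff x).hasDerivAt)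
      (hRd_cont.intervalIntegrable _ _) (hRdd_cont.intervalIntegrable _ _)
  have hbb1 : R Z₁ * deriv R Z₁ = 0 := hb1
  have hbb2 : R Z₂ * deriv R Z₂ = 0 := hb2
  have hsq : (∫ z in Z₁..Z₂, deriv R z * deriv R z) = ∫ z in Z₁..Z₂, (deriv R z) ^ 2 :=
    intervalIntegral.integral_congr (fun z _ => (pow_two (deriv R z)).symm)
  have hval : (∫ z in Z₁..Z₂, (H z T ^ 3 - HS z ^ 3) * (2 * H z T * Ht z T))
      = -(1 / 3) * ∫ z in Z₁..Z₂, (deriv R z) ^ 2 := by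
    rw [hcongr, intervalIntegral.integral_const_mul, hibp, hbb1, hbb2, hsq]; ring
  -- differentiation under the integral sign
  have hF'cont : Continuous (fun p : ℝ × ℝ =>
      (H p.1 p.2 ^ 3 - HS p.1 ^ 3) * (2 * H p.1 p.2 * Ht p.1 p.2)) :=
    ((hHcont.pow 3).sub ((hHScont.comp continuous_fst).pow 3)).mul
      ((continuous_const.mul hHcont).mul hHtcont)
  have hFslice : ∀ x : ℝ, Continuous (fun z : ℝ =>
      2 / 5 * H z x ^ 5 - HS z ^ 3 * H z x ^ 2 + 3 / 5 * HS z ^ 5) := by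
    intro x
    have hl : Continuous (fun z : ℝ => ((z, x) : ℝ × ℝ)) := continuous_id.prodMk continuous_const
    have h1 : Continuous (fun z : ℝ => H z x) := hHcont.comp hl
    exact ((continuous_const.mul (h1.pow 5)).sub ((hHScont.pow 3).mul (h1.pow 2))).add
      (continuous_const.mul (hHScont.pow 5))
  have hF'slice : Continuous (fun z : ℝ =>
      (H z T ^ 3 - HS z ^ 3) * (2 * H z T * Ht z T)) :=
    hF'cont.comp (continuous_id.prodMk continuous_const)
  -- uniform bound on a compact neighborhood
  obtain ⟨M, hM⟩ : ∃ M : ℝ, ∀ p ∈ (Set.uIcc Z₁ Z₂ ×ˢ Metric.closedBall T 1),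
      |(H p.1 p.2 ^ 3 - HS p.1 ^ 3) * (2 * H p.1 p.2 * Ht p.1 p.2)| ≤ M := by
    have hK : IsCompact (Set.uIcc Z₁ Z₂ ×ˢ Metric.closedBall T 1) :=
      isCompact_uIcc.prod (isCompact_closedBall T 1)
    have hne : (Set.uIcc Z₁ Z₂ ×ˢ Metric.closedBall T 1).Nonempty :=
      ⟨(Z₁, T), Set.left_mem_uIcc, Metric.mem_closedBall_self (by norm_num)⟩
    obtain ⟨p₀, _, hp₀⟩ := hK.exists_isMaxOn hne (continuous_abs.comp hF'cont).continuousOn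
    exact ⟨_, fun p hp => hp₀ hp⟩
  have hFt : ∀ z x : ℝ, HasDerivAt
      (fun s => 2 / 5 * H z s ^ 5 - HS z ^ 3 * H z s ^ 2 + 3 / 5 * HS z ^ 5)
      ((H z x ^ 3 - HS z ^ 3) * (2 * H z x * Ht z x)) x := by
    intro z x
    have h := hline_t z x
    have h5 := (((h.fun_pow 5).const_mul (2 / 5 : ℝ)).fun_sub
      ((h.fun_pow 2).const_mul (HS z ^ 3))).add_const (3 / 5 * HS z ^ 5)
    refine h5.congr_deriv ?_
    push_cast
    ring
  have key := (intervalIntegral.hasDerivAt_integral_of_dominated_loc_of_deriv_le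
      (μ := volume) (a := Z₁) (b := Z₂) (x₀ := T) (s := Metric.ball T 1)
      (F := fun x z => 2 / 5 * H z x ^ 5 - HS z ^ 3 * H z x ^ 2 + 3 / 5 * HS z ^ 5)
      (F' := fun x z => (H z x ^ 3 - HS z ^ 3) * (2 * H z x * Ht z x))
      (bound := fun _ => M) (Metric.ball_mem_nhds T one_pos)
      (Filter.Eventually.of_forall fun x => ((hFslice x).aestronglyMeasurable).restrict)
      ((hFslice T).intervalIntegrable _ _)
      (hF'slice.aestronglyMeasurable.restrict)
      (Filter.Eventually.of_forall fun z hz x hx => by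
        rw [Real.norm_eq_abs]
        exact hM (z, x) ⟨Set.uIoc_subset_uIcc hz, Metric.ball_subset_closedBall hx⟩)
      (intervalIntegrable_const)
      (Filter.Eventually.of_forall fun z _ x _ => hFt z x)).2
  have key' : HasDerivAt
      (fun t => ∫ Z in Z₁..Z₂,
        2 / 5 * H Z t ^ 5 - HS Z ^ 3 * H Z t ^ 2 + 3 / 5 * HS Z ^ 5)
      (∫ z in Z₁..Z₂, (H z T ^ 3 - HS z ^ 3) * (2 * H z T * Ht z T)) T := key
  rw [← hval]
  exact key'
end

section
/- For α, θ ∈ (0, π/2) with α + θ < π/2, the quantity R̂(α,θ) = sin α/(cos θ − sin α) is strictly positive, and the geometric factor Â(α,θ) = [cos θ · sin α · cos(α+θ) − (π/2 − α − θ)·sin²α]/(cos θ − sin α)² is strictly positive. -/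
open Real in
theorem concus_finn_geometric_factors (α θ : ℝ)
    (hα : α ∈ Set.Ioo 0 (π / 2)) (hθ : θ ∈ Set.Ioo 0 (π / 2))
    (hCF : α + θ < π / 2) :
    0 < Real.sin α / (Real.cos θ - Real.sin α) ∧
      0 < (Real.cos θ * Real.sin α * Real.cos (α + θ) -
            (π / 2 - α - θ) * Real.sin α ^ 2) /
          (Real.cos θ - Real.sin α) ^ 2 := by
  obtain ⟨hα0, hα2⟩ := hα
  obtain ⟨hθ0, hθ2⟩ := hθ
  have hsa : 0 < Real.sin α := Real.sin_pos_of_pos_of_lt_pi hα0 (by linarith [Real.pi_pos])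
  have hdenom : Real.sin α < Real.cos θ := by
    have : Real.cos θ = Real.sin (π / 2 - θ) := (Real.sin_pi_div_two_sub θ).symm
    rw [this]
    apply Real.sin_lt_sin_of_lt_of_le_pi_div_two (by linarith) (by linarith) (by linarith)
  have hdpos : 0 < Real.cos θ - Real.sin α := by linarith
  constructor
  · positivity
  · obtain ⟨b, hb⟩ : ∃ b : ℝ, b = π / 2 - α - θ := ⟨_, rfl⟩
    have hb0 : 0 < b := by rw [hb]; linarith
    have hb2 : b < π / 2 := by rw [hb]; linarith
    have hcb : 0 < Real.cos b := Real.cos_pos_of_mem_Ioo ⟨by linarith, hb2⟩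
    have hsb : 0 < Real.sin b := Real.sin_pos_of_pos_of_lt_pi hb0 (by nlinarith [Real.pi_pos])
    have hca : 0 < Real.cos α := Real.cos_pos_of_mem_Ioo ⟨by linarith, hα2⟩
    -- b < tan b ⇒ b * cos b < sin b
    have htan : b * Real.cos b < Real.sin b := by
      have := Real.lt_tan hb0 hb2
      rw [Real.tan_eq_sin_div_cos] at this
      calc b * Real.cos b < (Real.sin b / Real.cos b) * Real.cos b := by
            exact mul_lt_mul_of_pos_right this hcb
        _ = Real.sin b := by field_simp
    -- cos (α + b) = sin θ > 0
    have hcos_ab : Real.cos α * Real.cos b - Real.sin α * Real.sin b > 0 := by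
      have h1 : Real.cos (α + b) = Real.sin θ := by
        have : α + b = π / 2 - θ := by rw [hb]; ring
        rw [this, Real.cos_pi_div_two_sub]
      have h2 := Real.sin_pos_of_pos_of_lt_pi hθ0 (by linarith [Real.pi_pos])
      rw [← h1] at h2
      rw [Real.cos_add] at h2
      linarith
    -- rewrite cos θ and cos (α + θ) in terms of b
    have hcθ : Real.cos θ = Real.sin (α + b) := by
      have : α + b = π / 2 - θ := by rw [hb]; ring
      rw [this, Real.sin_pi_div_two_sub]
    have hcαθ : Real.cos (α + θ) = Real.sin b := by
      have : b = π / 2 - (α + θ) := by rw [hb]; ring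
      rw [this, Real.sin_pi_div_two_sub]
    have hnum : 0 < Real.cos θ * Real.sin α * Real.cos (α + θ) -
        (π / 2 - α - θ) * Real.sin α ^ 2 := by
      rw [hcθ, hcαθ, Real.sin_add, show π / 2 - α - θ = b from hb.symm]
      -- goal: 0 < (sinα cosb + cosα sinb) sinα sinb - b sinα^2
      have hpyth : Real.sin b ^ 2 + Real.cos b ^ 2 = 1 := Real.sin_sq_add_cos_sq b
      nlinarith [hcb, hsb, hsa,
        mul_lt_mul_of_pos_left htan (mul_pos hsa hsa),
        mul_pos (mul_pos hsa (mul_pos hsb hsb)) hcos_ab,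
        mul_pos (mul_pos hsa hsa) hsb]
    positivity
end
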